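/- Let k be a field of characteristic 2, a,b,c,d ∈ k, and F(x,y,z,w) the determinant of the 4×4 matrix with rows (a·y·z·w, x, 1, a), (b·x·z·w, y, 1, b), (c·x·y·w, z, 1, c), (d·x·y·z, w, 1, d). Define X(s,t) = ( a(s+tb)(s+tc)(s+td), b(s+ta)(s+tc)(s+td), c(s+ta)(s+tb)(s+td), d(s+ta)(s+tb)(s+tc) ). Then F(X(s,t)) = 0 identically as a polynomial in s,t. -/

import Mathlib

set_option maxHeartbeats 1000000


open MvPolynomial

/-- The Hutchinson determinantal equation of the Weddle quartic surface. -/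
def weddle {R : Type*} [CommRing R] (a b c d x y z w : R) : R :=
  Matrix.det !![a*y*z*w, x, 1, a;
                b*x*z*w, y, 1, b;
                c*x*y*w, z, 1, c;
                d*x*y*z, w, 1, d]

theorem weddle_eq {R : Type*} [CommRing R] (a b c d x y z w : R) :
    weddle a b c d x y z w =
      (a*y*z*w)*(y)*(1)*(d)
      - (a*y*z*w)*(y)*(c)*(1)
      - (a*y*z*w)*(1)*(z)*(d)
      + (a*y*z*w)*(1)*(c)*(w)
      + (a*y*z*w)*(b)*(z)*(1)
      - (a*y*z*w)*(b)*(1)*(w)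
      - (x)*(b*x*z*w)*(1)*(d)
      + (x)*(b*x*z*w)*(c)*(1)
      + (x)*(1)*(c*x*y*w)*(d)
      - (x)*(1)*(c)*(d*x*y*z)
      - (x)*(b)*(c*x*y*w)*(1)
      + (x)*(b)*(1)*(d*x*y*z)
      + (1)*(b*x*z*w)*(z)*(d)
      - (1)*(b*x*z*w)*(c)*(w)
      - (1)*(y)*(c*x*y*w)*(d)
      + (1)*(y)*(c)*(d*x*y*z)
      + (1)*(b)*(c*x*y*w)*(w)
      - (1)*(b)*(z)*(d*x*y*z)
      - (a)*(b*x*z*w)*(z)*(1)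
      + (a)*(b*x*z*w)*(1)*(w)
      + (a)*(y)*(c*x*y*w)*(1)
      - (a)*(y)*(1)*(d*x*y*z)
      - (a)*(1)*(c*x*y*w)*(w)
      + (a)*(1)*(z)*(d*x*y*z) := by
  have h1 : (Fin.castSucc 2 : Fin 4) = 2 := rfl
  have h2 : ((1 : Fin 4).succAbove 2) = 3 := rfl
  have h3 : ((2 : Fin 4).succAbove 2) = 3 := rfl
  have h4 : ((3 : Fin 4).succAbove (2 : Fin 3)) = 2 := rfl
  simp [weddle, Matrix.det_succ_row_zero, Fin.sum_univ_succ, Matrix.det_fin_three, h1, h2, h3, h4]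
  ring

theorem weddle_contains_twisted_cubic {k : Type*} [Field k] [CharP k 2] (a b c d : k) :
    (weddle (C a) (C b) (C c) (C d)
      (C a * (X 0 + X 1 * C b) * (X 0 + X 1 * C c) * (X 0 + X 1 * C d))
      (C b * (X 0 + X 1 * C a) * (X 0 + X 1 * C c) * (X 0 + X 1 * C d))
      (C c * (X 0 + X 1 * C a) * (X 0 + X 1 * C b) * (X 0 + X 1 * C d))
      (C d * (X 0 + X 1 * C a) * (X 0 + X 1 * C b) * (X 0 + X 1 * C c))
      : MvPolynomial (Fin 2) k) = 0 := by
  rw [weddle_eq]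
  ring
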